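/- Let Ψ₁, Ψ₂ be entropy functions that are strictly convex on (0,∞) and finite on (0,∞). Suppose α_n → ∞, for each n the measure π^{α_n} attains C_ub^{α_n}(μ,ν), and π^{α_n} converges weakly to a finite positive Borel measure π on X×Y. Then π is a coupling of μ and ν (π ∈ Π(μ,ν)) and π is optimal for the optimal transport problem: ∫ c dπ = C(μ,ν). -/

import Mathlib

open MeasureTheory Filter
open BoundedContinuousFunction
open scoped ENNReal NNReal Topology Classical

noncomputable section

/-- The quadratic transport cost `c(x,y) = τ‖x-y‖₂²`. -/
def cost {d : ℕ} (τ : ℝ) (x y : EuclideanSpace ℝ (Fin d)) : ℝ := τ * ‖x - y‖ ^ 2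

/-- An entropy function `Ψ : ℝ → [0,∞]`: convex, lower semicontinuous, non-negative
(automatic from the codomain), `Ψ(x) = ∞` for `x < 0`, `Ψ(1) = 0`, and superlinear. -/
structure IsEntropy (Ψ : ℝ → ℝ≥0∞) : Prop where
  convex : ∀ x y : ℝ, ∀ t : ℝ, 0 ≤ t → t ≤ 1 →
    Ψ (t * x + (1 - t) * y) ≤ ENNReal.ofReal t * Ψ x + ENNReal.ofReal (1 - t) * Ψ y
  lsc : LowerSemicontinuous Ψ
  eq_top_of_neg : ∀ x : ℝ, x < 0 → Ψ x = ∞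
  one_eq_zero : Ψ 1 = 0
  superlinear : Tendsto (fun t : ℝ => Ψ t / ENNReal.ofReal t) atTop (𝓝 ∞)

/-- The Csiszár divergence `D_Ψ(ρ|σ) = ∫ Ψ(dρ/dσ) dσ` if `ρ ≪ σ`, and `∞` otherwise. -/
def csiszar {Z : Type*} [MeasurableSpace Z] (Ψ : ℝ → ℝ≥0∞) (ρ σ : Measure Z) : ℝ≥0∞ :=
  if ρ ≪ σ then ∫⁻ z, Ψ ((ρ.rnDeriv σ z).toReal) ∂σ else ∞

/-- The objective of the `α`-scaled unbalanced optimal transport problem: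
`∫ c dπ + α D_{Ψ₁}(π₀|μ) + α D_{Ψ₂}(π₁|ν)`. -/
def uotObj {d : ℕ} (τ α : ℝ) (Ψ₁ Ψ₂ : ℝ → ℝ≥0∞)
    (μ ν : Measure (EuclideanSpace ℝ (Fin d)))
    (π : Measure (EuclideanSpace ℝ (Fin d) × EuclideanSpace ℝ (Fin d))) : ℝ≥0∞ :=
  (∫⁻ z, ENNReal.ofReal (cost τ z.1 z.2) ∂π)
    + ENNReal.ofReal α * csiszar Ψ₁ (π.map Prod.fst) μ
    + ENNReal.ofReal α * csiszar Ψ₂ (π.map Prod.snd) ν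

/-- The `α`-scaled unbalanced optimal transport cost `C_ub^α(μ,ν)`, the infimum of the
objective over finite positive Borel measures `π` supported on `X × Y`. -/
def UOTcost {d : ℕ} (τ α : ℝ) (Ψ₁ Ψ₂ : ℝ → ℝ≥0∞) (X Y : Set (EuclideanSpace ℝ (Fin d)))
    (μ ν : Measure (EuclideanSpace ℝ (Fin d))) : ℝ≥0∞ :=
  ⨅ (π : Measure (EuclideanSpace ℝ (Fin d) × EuclideanSpace ℝ (Fin d)))
    (_ : IsFiniteMeasure π) (_ : π ((X ×ˢ Y)ᶜ) = 0), uotObj τ α Ψ₁ Ψ₂ μ ν π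

/-- The optimal transport cost `C(μ,ν) = inf_{π ∈ Π(μ,ν)} ∫ c dπ`. -/
def OTcost {d : ℕ} (τ : ℝ) (μ ν : Measure (EuclideanSpace ℝ (Fin d))) : ℝ≥0∞ :=
  ⨅ (π : Measure (EuclideanSpace ℝ (Fin d) × EuclideanSpace ℝ (Fin d)))
    (_ : π.map Prod.fst = μ ∧ π.map Prod.snd = ν),
    ∫⁻ z, ENNReal.ofReal (cost τ z.1 z.2) ∂π


/-- `Ψ` is strictly convex on `(0,∞)`. -/
def StrictlyConvexOnPos (Ψ : ℝ → ℝ≥0∞) : Prop :=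
  ∀ x ∈ Set.Ioi (0:ℝ), ∀ y ∈ Set.Ioi (0:ℝ), x ≠ y → ∀ t : ℝ, 0 < t → t < 1 →
    Ψ (t * x + (1 - t) * y) < ENNReal.ofReal t * Ψ x + ENNReal.ofReal (1 - t) * Ψ y

lemma csiszar_self {Z : Type*} [MeasurableSpace Z] {Ψ : ℝ → ℝ≥0∞} (hΨ1 : Ψ 1 = 0)
    (μ : Measure Z) [SigmaFinite μ] : csiszar Ψ μ μ = 0 := by
  rw [csiszar, if_pos Measure.AbsolutelyContinuous.rfl]
  have h := Measure.rnDeriv_self μ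
  have : ∫⁻ z, Ψ ((μ.rnDeriv μ z).toReal) ∂μ = ∫⁻ _z, (0:ℝ≥0∞) ∂μ := by
    refine lintegral_congr_ae (h.mono fun x hx => ?_)
    simp only []; rw [show (μ.rnDeriv μ) x = 1 from hx]; simp [hΨ1]
  rw [this]; simp

lemma entropy_pos_of_ne_one {Ψ : ℝ → ℝ≥0∞} (hΨ : IsEntropy Ψ) (hsc : StrictlyConvexOnPos Ψ)
    {u : ℝ} (hu : 0 < u) (hne : u ≠ 1) : 0 < Ψ u := by
  rcases eq_or_ne (Ψ u) 0 with h0 | h0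
  · exfalso
    have := hsc 1 (by simp) u hu (Ne.symm hne) (1/2) (by norm_num) (by norm_num)
    rw [hΨ.one_eq_zero, h0] at this
    simp at this
  · exact pos_iff_ne_zero.mpr h0

lemma entropy_pointwise_bound {Ψ : ℝ → ℝ≥0∞} (hΨ : IsEntropy Ψ) (hsc : StrictlyConvexOnPos Ψ)
    (hfin : ∀ x : ℝ, 0 < x → Ψ x ≠ ∞) {ε : ℝ} (hε : 0 < ε) (hε1 : ε < 1) :
    ∃ K : ℝ, 0 < K ∧ ∀ t : ℝ, 0 ≤ t → Ψ t ≠ ∞ →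
      |t - 1| ≤ ε + (ε / K) * (Ψ t).toReal := by
  have h1ε : (0:ℝ) < 1 + ε := by linarith
  have h1ε' : (0:ℝ) < 1 - ε := by linarith
  have hp1 : 0 < (Ψ (1 + ε)).toReal :=
    ENNReal.toReal_pos (entropy_pos_of_ne_one hΨ hsc h1ε (by linarith)).ne' (hfin _ h1ε)
  have hp2 : 0 < (Ψ (1 - ε)).toReal :=
    ENNReal.toReal_pos (entropy_pos_of_ne_one hΨ hsc h1ε' (by linarith)).ne' (hfin _ h1ε')
  refine ⟨min (Ψ (1 + ε)).toReal (Ψ (1 - ε)).toReal, lt_min hp1 hp2, fun t ht htfin => ?_⟩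
  set K := min (Ψ (1 + ε)).toReal (Ψ (1 - ε)).toReal with hK
  have hKpos : 0 < K := lt_min hp1 hp2
  have hΨt : 0 ≤ (Ψ t).toReal := ENNReal.toReal_nonneg
  have hεK : 0 ≤ ε / K := le_of_lt (div_pos hε hKpos)
  rcases le_or_gt (|t - 1|) ε with h | h
  · nlinarith [mul_nonneg hεK hΨt]
  · rcases le_or_gt t 1 with hle | hgt
    · -- t < 1 - ε
      have htlt : t < 1 - ε := by
        rcases abs_cases (t - 1) with ⟨he, _⟩ | ⟨he, _⟩ <;> linarith
      set s := ε / (1 - t) with hs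
      have h1t : 0 < 1 - t := by linarith
      have hs0 : 0 < s := div_pos hε h1t
      have hs1 : s < 1 := (div_lt_one h1t).mpr (by linarith)
      have hcomb : s * t + (1 - s) * 1 = 1 - ε := by
        linear_combination -(div_mul_cancel₀ ε h1t.ne')
      have hconv := hΨ.convex t 1 s hs0.le hs1.le
      rw [hcomb, hΨ.one_eq_zero, mul_zero, add_zero] at hconv
      have htop : ENNReal.ofReal s * Ψ t ≠ ∞ :=
        ENNReal.mul_ne_top ENNReal.ofReal_ne_top htfin
      have h2 : (Ψ (1 - ε)).toReal ≤ s * (Ψ t).toReal := by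
        have := ENNReal.toReal_mono htop hconv
        rwa [ENNReal.toReal_mul, ENNReal.toReal_ofReal hs0.le] at this
      have hKle : K ≤ s * (Ψ t).toReal := le_trans (min_le_right _ _) h2
      have habs : |t - 1| = ε / s := by
        rw [abs_sub_comm, abs_of_pos h1t]; field_simp [hs]; linear_combination (div_mul_cancel₀ ε h1t.ne')
      have key : ε / s ≤ (ε / K) * (Ψ t).toReal := by
        rw [div_le_iff₀ hs0]
        calc ε = (ε / K) * K := by field_simp
          _ ≤ (ε / K) * (s * (Ψ t).toReal) := by
              exact mul_le_mul_of_nonneg_left hKle hεK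
          _ = (ε / K) * (Ψ t).toReal * s := by ring
      rw [habs]; linarith
    · -- t > 1 + ε
      have htgt : 1 + ε < t := by
        rcases abs_cases (t - 1) with ⟨he, _⟩ | ⟨he, _⟩ <;> linarith
      set s := ε / (t - 1) with hs
      have h1t : 0 < t - 1 := by linarith
      have hs0 : 0 < s := div_pos hε h1t
      have hs1 : s < 1 := (div_lt_one h1t).mpr (by linarith)
      have hcomb : s * t + (1 - s) * 1 = 1 + ε := by
        linear_combination (div_mul_cancel₀ ε h1t.ne')
      have hconv := hΨ.convex t 1 s hs0.le hs1.le
      rw [hcomb, hΨ.one_eq_zero, mul_zero, add_zero] at hconv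
      have htop : ENNReal.ofReal s * Ψ t ≠ ∞ :=
        ENNReal.mul_ne_top ENNReal.ofReal_ne_top htfin
      have h2 : (Ψ (1 + ε)).toReal ≤ s * (Ψ t).toReal := by
        have := ENNReal.toReal_mono htop hconv
        rwa [ENNReal.toReal_mul, ENNReal.toReal_ofReal hs0.le] at this
      have hKle : K ≤ s * (Ψ t).toReal := le_trans (min_le_left _ _) h2
      have habs : |t - 1| = ε / s := by
        rw [abs_of_pos h1t]; field_simp [hs]; linear_combination (div_mul_cancel₀ ε h1t.ne')
      have key : ε / s ≤ (ε / K) * (Ψ t).toReal := by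
        rw [div_le_iff₀ hs0]
        calc ε = (ε / K) * K := by field_simp
          _ ≤ (ε / K) * (s * (Ψ t).toReal) := by
              exact mul_le_mul_of_nonneg_left hKle hεK
          _ = (ε / K) * (Ψ t).toReal * s := by ring
      rw [habs]; linarith

variable {Ω : Type*} [MeasurableSpace Ω] [TopologicalSpace Ω] [OpensMeasurableSpace Ω]

/-- Integral comparison for bounded continuous functions under small divergence. -/
lemma integral_close_of_divergence_small
    {Ψ : ℝ → ℝ≥0∞} (hΨmeas : Measurable Ψ)
    (ρ μ : Measure Ω) [IsFiniteMeasure ρ] [IsProbabilityMeasure μ] (hac : ρ ≪ μ)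
    (hD : ∫⁻ x, Ψ ((ρ.rnDeriv μ x).toReal) ∂μ ≠ ∞)
    {ε Kc : ℝ} (hε : 0 ≤ ε) (hKc : 0 ≤ Kc)
    (hpt : ∀ t : ℝ, 0 ≤ t → Ψ t ≠ ∞ → |t - 1| ≤ ε + Kc * (Ψ t).toReal)
    (f : Ω →ᵇ ℝ) :
    |(∫ x, f x ∂ρ) - ∫ x, f x ∂μ| ≤
      ‖f‖ * (ε + Kc * (∫⁻ x, Ψ ((ρ.rnDeriv μ x).toReal) ∂μ).toReal) := by
  set r : Ω → ℝ := fun x => (ρ.rnDeriv μ x).toReal with hr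
  have hrmeas : Measurable r := (Measure.measurable_rnDeriv ρ μ).ennreal_toReal
  set g : Ω → ℝ := fun x => (Ψ (r x)).toReal with hg
  have hgmeas : Measurable g := (hΨmeas.comp hrmeas).ennreal_toReal
  have hae : ∀ᵐ x ∂μ, Ψ (r x) ≠ ∞ := by
    filter_upwards [ae_lt_top (hΨmeas.comp hrmeas) hD] with x hx using hx.ne
  have hg_int : Integrable g μ :=
    integrable_toReal_of_lintegral_ne_top (hΨmeas.comp hrmeas).aemeasurable hD
  have hr_int : Integrable r μ := Measure.integrable_toReal_rnDeriv
  have hrm1_int : Integrable (fun x => |r x - 1|) μ := (hr_int.sub (integrable_const 1)).abs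
  have hgint_eq : ∫ x, g x ∂μ = (∫⁻ x, Ψ (r x) ∂μ).toReal :=
    integral_toReal (hΨmeas.comp hrmeas).aemeasurable
      (ae_lt_top (hΨmeas.comp hrmeas) hD)
  have hfρ_int : Integrable (fun x => f x) ρ := f.integrable ρ
  have hfμ_int : Integrable (fun x => f x) μ := f.integrable μ
  have hrf_int : Integrable (fun x => r x • f x) μ :=
    (MeasureTheory.integrable_rnDeriv_smul_iff hac).mpr hfρ_int
  have hmap : ∫ x, f x ∂ρ = ∫ x, r x • f x ∂μ := (MeasureTheory.integral_rnDeriv_smul hac).symm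
  have hsub : (∫ x, f x ∂ρ) - ∫ x, f x ∂μ = ∫ x, (r x - 1) * f x ∂μ := by
    rw [hmap, ← integral_sub hrf_int hfμ_int]
    congr 1; funext x; simp [smul_eq_mul]; ring
  rw [hsub]
  have habs : |∫ x, (r x - 1) * f x ∂μ| ≤ ∫ x, |r x - 1| * ‖f‖ ∂μ := by
    rw [← Real.norm_eq_abs]
    refine (norm_integral_le_integral_norm _).trans ?_
    refine integral_mono ((hrf_int.sub hfμ_int).congr ?_).norm (hrm1_int.mul_const ‖f‖) ?_
    · filter_upwards with x; simp [smul_eq_mul]; ring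
    · intro x
      simp only [Real.norm_eq_abs, abs_mul]
      exact mul_le_mul_of_nonneg_left
        ((Real.norm_eq_abs (f x)) ▸ f.norm_coe_le_norm x) (abs_nonneg _)
  have hbound : ∫ x, |r x - 1| * ‖f‖ ∂μ ≤ (ε + Kc * ∫ x, g x ∂μ) * ‖f‖ := by
    have hpt' : ∀ᵐ x ∂μ, |r x - 1| * ‖f‖ ≤ (ε + Kc * g x) * ‖f‖ := by
      filter_upwards [hae] with x hx
      exact mul_le_mul_of_nonneg_right (hpt (r x) ENNReal.toReal_nonneg hx) (norm_nonneg f)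
    have : ∫ x, (ε + Kc * g x) * ‖f‖ ∂μ = (ε + Kc * ∫ x, g x ∂μ) * ‖f‖ := by
      rw [integral_mul_const, integral_add (integrable_const ε) (hg_int.const_mul Kc),
        integral_const, integral_const_mul]
      simp
    rw [← this]
    exact integral_mono_ae (hrm1_int.mul_const ‖f‖)
      (((integrable_const ε).add (hg_int.const_mul Kc)).mul_const ‖f‖) hpt'
  calc |∫ x, (r x - 1) * f x ∂μ| ≤ (ε + Kc * ∫ x, g x ∂μ) * ‖f‖ := habs.trans hbound
    _ = ‖f‖ * (ε + Kc * (∫⁻ x, Ψ (r x) ∂μ).toReal) := by rw [hgint_eq]; ring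

variable {Ω : Type*} [MeasurableSpace Ω] [TopologicalSpace Ω] [OpensMeasurableSpace Ω]

/-- Two finite measures agreeing on integrals of all real bounded continuous functions
are equal. -/
lemma ext_of_forall_integral_bcf_eq {Ω : Type*} [MeasurableSpace Ω] [TopologicalSpace Ω]
    [HasOuterApproxClosed Ω] [BorelSpace Ω] (ρ σ : Measure Ω)
    [IsFiniteMeasure ρ] [IsFiniteMeasure σ]
    (h : ∀ f : Ω →ᵇ ℝ, ∫ x, f x ∂ρ = ∫ x, f x ∂σ) : ρ = σ := by
  refine ext_of_forall_lintegral_eq_of_IsFiniteMeasure (fun f => ?_)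
  have lip : LipschitzWith 1 ((↑) : ℝ≥0 → ℝ) := isometry_subtype_coe.lipschitz
  set g : Ω →ᵇ ℝ := f.comp _ lip with hgdef
  have hgx : ∀ x, g x = (f x : ℝ) := fun x => rfl
  have h1 : ∫⁻ x, f x ∂ρ = ENNReal.ofReal (∫ x, g x ∂ρ) := by
    rw [lintegral_coe_eq_integral (fun x => f x) (by exact g.integrable ρ)]
    congr 1
  have h2 : ∫⁻ x, f x ∂σ = ENNReal.ofReal (∫ x, g x ∂σ) := by
    rw [lintegral_coe_eq_integral (fun x => f x) (by exact g.integrable σ)]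
    congr 1
  rw [h1, h2, h g]

/-- Convergence of integrals of bounded continuous functions when divergences tend to zero. -/
lemma tendsto_integral_of_divergence_tendsto_zero
    {Ψ : ℝ → ℝ≥0∞} (hΨ : IsEntropy Ψ) (hsc : StrictlyConvexOnPos Ψ)
    (hfin : ∀ x : ℝ, 0 < x → Ψ x ≠ ∞)
    (ρ : ℕ → Measure Ω) (hρfin : ∀ n, IsFiniteMeasure (ρ n))
    (μ : Measure Ω) [IsProbabilityMeasure μ]
    (D : ℕ → ℝ≥0∞) (hD : ∀ n, csiszar Ψ (ρ n) μ ≤ D n)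
    (hD0 : Tendsto D atTop (𝓝 0)) (f : Ω →ᵇ ℝ) :
    Tendsto (fun n => ∫ x, f x ∂(ρ n)) atTop (𝓝 (∫ x, f x ∂μ)) := by
  have hΨmeas : Measurable Ψ := hΨ.lsc.measurable
  rw [Metric.tendsto_atTop]
  intro δ hδ
  rw [← eventually_atTop]
  -- choose ε
  set ε : ℝ := min (1/2) (δ / (4 * (‖f‖ + 1))) with hε_def
  have hfpos : (0:ℝ) < ‖f‖ + 1 := by positivity
  have hε : 0 < ε := lt_min (by norm_num) (by positivity)
  have hε1 : ε < 1 := lt_of_le_of_lt (min_le_left _ _) (by norm_num)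
  obtain ⟨K, hKpos, hpt⟩ := entropy_pointwise_bound hΨ hsc hfin hε hε1
  -- eventually D n is small
  have hDfin : ∀ᶠ n in atTop, D n < ENNReal.ofReal (δ / (4 * (‖f‖ + 1)) * (K / ε)) := by
    refine hD0.eventually_lt_const ?_
    exact ENNReal.ofReal_pos.mpr (by positivity)
  filter_upwards [hDfin] with n hn
  -- the divergence is finite, hence absolutely continuous
  have hcs := hD n
  have hcs_lt : csiszar Ψ (ρ n) μ < ∞ := lt_of_le_of_lt hcs (lt_of_lt_of_le hn le_top)
  have hac : ρ n ≪ μ := by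
    by_contra hnac
    rw [csiszar, if_neg hnac] at hcs_lt
    exact (lt_irrefl _ hcs_lt).elim
  rw [csiszar, if_pos hac] at hcs hcs_lt
  have hDne : ∫⁻ x, Ψ (((ρ n).rnDeriv μ x).toReal) ∂μ ≠ ∞ := hcs_lt.ne
  have := hρfin n
  have key := integral_close_of_divergence_small hΨmeas (ρ n) μ hac hDne hε.le
    (le_of_lt (div_pos hε hKpos))
    (fun t ht htf => by simpa [div_mul_eq_mul_div] using hpt t ht htf) f
  -- bound the divergence term
  have htoReal : (∫⁻ x, Ψ (((ρ n).rnDeriv μ x).toReal) ∂μ).toReal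
      ≤ δ / (4 * (‖f‖ + 1)) * (K / ε) := by
    have := ENNReal.toReal_mono (by simp) (le_of_lt (lt_of_le_of_lt hcs hn))
    rwa [ENNReal.toReal_ofReal (by positivity)] at this
  rw [Real.dist_eq]
  have hεle : ε ≤ δ / (4 * (‖f‖ + 1)) := min_le_right _ _
  have hfK : ‖f‖ ≤ ‖f‖ + 1 := by linarith
  have h1 : ‖f‖ * ε ≤ δ / 4 := by
    calc ‖f‖ * ε ≤ (‖f‖ + 1) * (δ / (4 * (‖f‖ + 1))) := by
          exact mul_le_mul hfK hεle hε.le (by linarith)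
      _ = δ / 4 := by rw [mul_comm]; rw [div_mul_eq_mul_div, mul_comm 4 (‖f‖ + 1), ← div_div, mul_div_assoc, mul_comm, mul_div_assoc, div_self (by positivity : (0:ℝ) < ‖f‖ + 1).ne', one_mul]
  have h2 : ‖f‖ * ((ε / K) * (∫⁻ x, Ψ (((ρ n).rnDeriv μ x).toReal) ∂μ).toReal) ≤ δ / 4 := by
    have h3 : (ε / K) * (∫⁻ x, Ψ (((ρ n).rnDeriv μ x).toReal) ∂μ).toReal
        ≤ (ε / K) * (δ / (4 * (‖f‖ + 1)) * (K / ε)) := by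
      exact mul_le_mul_of_nonneg_left htoReal (le_of_lt (div_pos hε hKpos))
    have h4 : (ε / K) * (δ / (4 * (‖f‖ + 1)) * (K / ε)) = δ / (4 * (‖f‖ + 1)) := by
      field_simp
    calc ‖f‖ * ((ε / K) * (∫⁻ x, Ψ (((ρ n).rnDeriv μ x).toReal) ∂μ).toReal)
        ≤ ‖f‖ * (δ / (4 * (‖f‖ + 1))) := by
          refine mul_le_mul_of_nonneg_left (h3.trans_eq h4) (norm_nonneg f)
      _ ≤ (‖f‖ + 1) * (δ / (4 * (‖f‖ + 1))) := by
          refine mul_le_mul_of_nonneg_right hfK (by positivity)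
      _ = δ / 4 := by rw [mul_comm]; rw [div_mul_eq_mul_div, mul_comm 4 (‖f‖ + 1), ← div_div, mul_div_assoc, mul_comm, mul_div_assoc, div_self (by positivity : (0:ℝ) < ‖f‖ + 1).ne', one_mul]
  calc |(∫ x, f x ∂(ρ n)) - ∫ x, f x ∂μ|
      ≤ ‖f‖ * (ε + (ε / K) * (∫⁻ x, Ψ (((ρ n).rnDeriv μ x).toReal) ∂μ).toReal) := key
    _ = ‖f‖ * ε + ‖f‖ * ((ε / K) * (∫⁻ x, Ψ (((ρ n).rnDeriv μ x).toReal) ∂μ).toReal) := by ring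
    _ ≤ δ / 4 + δ / 4 := add_le_add h1 h2
    _ < δ := by linarith

lemma null_compl_prod {Z₁ Z₂ : Type*} [MeasurableSpace Z₁] [MeasurableSpace Z₂]
    (γ : Measure (Z₁ × Z₂)) {X : Set Z₁} {Y : Set Z₂}
    (hXm : MeasurableSet X) (hYm : MeasurableSet Y)
    (h1 : γ.map Prod.fst Xᶜ = 0) (h2 : γ.map Prod.snd Yᶜ = 0) :
    γ ((X ×ˢ Y)ᶜ) = 0 := by
  have hsub : (X ×ˢ Y)ᶜ ⊆ (Prod.fst ⁻¹' Xᶜ) ∪ (Prod.snd ⁻¹' Yᶜ) := by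
    intro z hz
    simp only [Set.mem_compl_iff, Set.mem_prod, not_and] at hz
    simp only [Set.mem_union, Set.mem_preimage, Set.mem_compl_iff]
    tauto
  refine measure_mono_null hsub (measure_union_null ?_ ?_)
  · exact (Measure.map_apply measurable_fst hXm.compl) ▸ h1
  · exact (Measure.map_apply measurable_snd hYm.compl) ▸ h2


/-- If `α_n → ∞`, each `π^{α_n}` attains `C_ub^{α_n}(μ,ν)`, and
`π^{α_n}` converges weakly to `π`, then `π` is a coupling of `μ` and `ν` and it is
optimal for the optimal transport problem. -/
theorem uot_weak_limit_is_optimal_coupling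
    {d : ℕ} (τ : ℝ) (hτ : 0 < τ)
    (X Y : Set (EuclideanSpace ℝ (Fin d))) (hX : IsCompact X) (hY : IsCompact Y)
    (μ ν : Measure (EuclideanSpace ℝ (Fin d)))
    [IsProbabilityMeasure μ] [IsProbabilityMeasure ν]
    (hμX : μ Xᶜ = 0) (hνY : ν Yᶜ = 0)
    (Ψ₁ Ψ₂ : ℝ → ℝ≥0∞) (hΨ₁ : IsEntropy Ψ₁) (hΨ₂ : IsEntropy Ψ₂)
    (hΨ₁sc : StrictlyConvexOnPos Ψ₁) (hΨ₂sc : StrictlyConvexOnPos Ψ₂)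
    (hΨ₁fin : ∀ x : ℝ, 0 < x → Ψ₁ x ≠ ∞) (hΨ₂fin : ∀ x : ℝ, 0 < x → Ψ₂ x ≠ ∞)
    (a : ℕ → ℝ) (hapos : ∀ n, 0 < a n) (ha : Tendsto a atTop atTop)
    (π : ℕ → Measure (EuclideanSpace ℝ (Fin d) × EuclideanSpace ℝ (Fin d)))
    (hπfin : ∀ n, IsFiniteMeasure (π n)) (hπsupp : ∀ n, π n ((X ×ˢ Y)ᶜ) = 0)
    (hπmin : ∀ n, uotObj τ (a n) Ψ₁ Ψ₂ μ ν (π n) = UOTcost τ (a n) Ψ₁ Ψ₂ X Y μ ν)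
    (πlim : Measure (EuclideanSpace ℝ (Fin d) × EuclideanSpace ℝ (Fin d))) [IsFiniteMeasure πlim]
    (hconv : ∀ f : EuclideanSpace ℝ (Fin d) × EuclideanSpace ℝ (Fin d) → ℝ, Continuous f → (∃ C : ℝ, ∀ z, |f z| ≤ C) →
      Tendsto (fun n => ∫ z, f z ∂(π n)) atTop (𝓝 (∫ z, f z ∂πlim))) :
    πlim.map Prod.fst = μ ∧ πlim.map Prod.snd = ν ∧
      (∫⁻ z, ENNReal.ofReal (cost τ z.1 z.2) ∂πlim) = OTcost τ μ ν := by

  classical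
  have hcost_cont : Continuous (fun z : EuclideanSpace ℝ (Fin d) × EuclideanSpace ℝ (Fin d) =>
      cost τ z.1 z.2) := by
    unfold cost
    exact continuous_const.mul ((continuous_fst.sub continuous_snd).norm.pow 2)
  have hcost_nonneg : ∀ z : EuclideanSpace ℝ (Fin d) × EuclideanSpace ℝ (Fin d),
      0 ≤ cost τ z.1 z.2 := fun z => by unfold cost; positivity
  -- X, Y nonempty
  have hXne : X.Nonempty := by
    rw [Set.nonempty_iff_ne_empty]; intro h
    have h2 : μ Set.univ = 0 := by rw [← Set.compl_empty, ← h]; exact hμX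
    simp [measure_univ] at h2
  have hYne : Y.Nonempty := by
    rw [Set.nonempty_iff_ne_empty]; intro h
    have h2 : ν Set.univ = 0 := by rw [← Set.compl_empty, ← h]; exact hνY
    simp [measure_univ] at h2
  -- bound on the cost over X × Y
  obtain ⟨z0, hz0, hK0⟩ := (hX.prod hY).exists_isMaxOn (hXne.prod hYne)
      hcost_cont.continuousOn
  rw [isMaxOn_iff] at hK0
  set K0 : ℝ := cost τ z0.1 z0.2 with hK0def
  have hK0nonneg : 0 ≤ K0 := hcost_nonneg z0
  -- truncated cost
  set ct : EuclideanSpace ℝ (Fin d) × EuclideanSpace ℝ (Fin d) → ℝ :=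
    fun z => min (cost τ z.1 z.2) K0 with hct_def
  have hct_cont : Continuous ct := hcost_cont.min continuous_const
  have hct_nonneg : ∀ z, 0 ≤ ct z := fun z => le_min (hcost_nonneg z) hK0nonneg
  have hct_bdd : ∀ z, |ct z| ≤ K0 := fun z => by
    rw [abs_of_nonneg (hct_nonneg z)]; exact min_le_right _ _
  have hct_eq : ∀ z ∈ X ×ˢ Y, ct z = cost τ z.1 z.2 := fun z hz =>
    min_eq_left (hK0 z hz)
  -- lintegral of the cost vs integral of the truncated cost
  have hlint : ∀ m : Measure (EuclideanSpace ℝ (Fin d) × EuclideanSpace ℝ (Fin d)),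
      IsFiniteMeasure m → m ((X ×ˢ Y)ᶜ) = 0 →
      ∫⁻ z, ENNReal.ofReal (cost τ z.1 z.2) ∂m = ENNReal.ofReal (∫ z, ct z ∂m) := by
    intro m hm hm0
    haveI := hm
    have hae : ∀ᵐ z ∂m, z ∈ X ×ˢ Y := by
      rw [ae_iff]
      convert hm0 using 2
      rfl
    have h1 : (fun z : EuclideanSpace ℝ (Fin d) × EuclideanSpace ℝ (Fin d) =>
        ENNReal.ofReal (cost τ z.1 z.2)) =ᵐ[m] fun z => ENNReal.ofReal (ct z) := by
      filter_upwards [hae] with z hz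
      rw [hct_eq z hz]
    have hint : Integrable ct m := ⟨hct_cont.aestronglyMeasurable,
      HasFiniteIntegral.of_bounded (C := K0) (ae_of_all _ fun z => by
        rw [Real.norm_eq_abs]; exact hct_bdd z)⟩
    rw [lintegral_congr_ae h1, ← ofReal_integral_eq_lintegral_ofReal hint
      (ae_of_all _ hct_nonneg)]
  -- couplings are supported on X × Y
  have hcoupling_supp : ∀ γ : Measure (EuclideanSpace ℝ (Fin d) × EuclideanSpace ℝ (Fin d)),
      γ.map Prod.fst = μ → γ.map Prod.snd = ν → γ ((X ×ˢ Y)ᶜ) = 0 := fun γ h1 h2 =>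
    null_compl_prod γ hX.isClosed.measurableSet hY.isClosed.measurableSet
      (by rw [h1]; exact hμX) (by rw [h2]; exact hνY)
  -- UOT ≤ OT
  have hUOT_le_OT : ∀ α : ℝ, UOTcost τ α Ψ₁ Ψ₂ X Y μ ν ≤ OTcost τ μ ν := by
    intro α
    rw [OTcost]
    refine le_iInf fun γ => le_iInf fun hγ => ?_
    haveI hγprob : IsProbabilityMeasure γ := ⟨by
      have h := congrArg (fun m : Measure (EuclideanSpace ℝ (Fin d)) => m Set.univ) hγ.1
      simp only [Measure.map_apply measurable_fst MeasurableSet.univ, Set.preimage_univ,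
        measure_univ] at h
      exact h⟩
    have hγsupp := hcoupling_supp γ hγ.1 hγ.2
    refine le_trans (iInf_le_of_le γ (iInf_le_of_le (inferInstance : IsFiniteMeasure γ)
      (iInf_le_of_le hγsupp le_rfl))) ?_
    rw [uotObj, hγ.1, hγ.2, csiszar_self hΨ₁.one_eq_zero μ, csiszar_self hΨ₂.one_eq_zero ν]
    simp
  -- OT is finite
  have hOT_le : OTcost τ μ ν ≤ ENNReal.ofReal K0 := by
    have hmm : (μ.prod ν).map Prod.fst = μ := Measure.fst_prod
    have hmm2 : (μ.prod ν).map Prod.snd = ν := Measure.snd_prod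
    refine le_trans (iInf_le_of_le (μ.prod ν) (iInf_le_of_le ⟨hmm, hmm2⟩ le_rfl)) ?_
    have hs := hcoupling_supp _ hmm hmm2
    rw [hlint _ inferInstance hs]
    refine ENNReal.ofReal_le_ofReal ?_
    have hint : Integrable ct (μ.prod ν) := ⟨hct_cont.aestronglyMeasurable,
      HasFiniteIntegral.of_bounded (C := K0) (ae_of_all _ fun z => by
        rw [Real.norm_eq_abs]; exact hct_bdd z)⟩
    calc ∫ z, ct z ∂(μ.prod ν) ≤ ∫ _z, K0 ∂(μ.prod ν) :=
          integral_mono hint (integrable_const K0) fun z => min_le_right _ _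
      _ = K0 := by simp
  set M : ℝ≥0∞ := OTcost τ μ ν with hMdef
  have hM_ne : M ≠ ∞ := (hOT_le.trans_lt ENNReal.ofReal_lt_top).ne
  have hobj_le : ∀ n, uotObj τ (a n) Ψ₁ Ψ₂ μ ν (π n) ≤ M := fun n =>
    le_of_eq (hπmin n) |>.trans (hUOT_le_OT (a n))
  -- divergences go to zero
  have hcs1 : ∀ n, csiszar Ψ₁ ((π n).map Prod.fst) μ ≤ M / ENNReal.ofReal (a n) := by
    intro n
    have h := hobj_le n
    rw [uotObj] at h
    have hB : ENNReal.ofReal (a n) * csiszar Ψ₁ ((π n).map Prod.fst) μ ≤ M :=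
      le_trans (le_trans le_add_self le_self_add) h
    rw [ENNReal.le_div_iff_mul_le (Or.inl (ENNReal.ofReal_pos.mpr (hapos n)).ne')
      (Or.inl ENNReal.ofReal_ne_top)]
    rwa [mul_comm]
  have hcs2 : ∀ n, csiszar Ψ₂ ((π n).map Prod.snd) ν ≤ M / ENNReal.ofReal (a n) := by
    intro n
    have h := hobj_le n
    rw [uotObj] at h
    have hB : ENNReal.ofReal (a n) * csiszar Ψ₂ ((π n).map Prod.snd) ν ≤ M :=
      le_trans le_add_self h
    rw [ENNReal.le_div_iff_mul_le (Or.inl (ENNReal.ofReal_pos.mpr (hapos n)).ne')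
      (Or.inl ENNReal.ofReal_ne_top)]
    rwa [mul_comm]
  have hDtend : Tendsto (fun n => M / ENNReal.ofReal (a n)) atTop (𝓝 0) := by
    have h1 : Tendsto (fun n => ENNReal.ofReal (a n)) atTop (𝓝 ∞) :=
      ENNReal.tendsto_ofReal_atTop.comp ha
    have h2 : Tendsto (fun n => (ENNReal.ofReal (a n))⁻¹) atTop (𝓝 0) := by
      have := ENNReal.tendsto_inv_iff.mpr h1
      simpa using this
    have h3 := ENNReal.Tendsto.const_mul h2 (Or.inr hM_ne)
    simpa [div_eq_mul_inv] using h3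
  haveI hmapfin1 : ∀ n, IsFiniteMeasure ((π n).map Prod.fst) := fun n => by
    haveI := hπfin n; exact Measure.isFiniteMeasure_map _ _
  haveI hmapfin2 : ∀ n, IsFiniteMeasure ((π n).map Prod.snd) := fun n => by
    haveI := hπfin n; exact Measure.isFiniteMeasure_map _ _
  -- marginal identification
  have hfst : πlim.map Prod.fst = μ := by
    haveI : IsFiniteMeasure (πlim.map Prod.fst) := Measure.isFiniteMeasure_map _ _
    refine ext_of_forall_integral_bcf_eq _ _ (fun f => ?_)
    have hbcf := tendsto_integral_of_divergence_tendsto_zero hΨ₁ hΨ₁sc hΨ₁fin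
      (fun n => (π n).map Prod.fst) hmapfin1 μ _ hcs1 hDtend f
    have hmap_int : ∀ m : Measure (EuclideanSpace ℝ (Fin d) × EuclideanSpace ℝ (Fin d)),
        ∫ x, f x ∂(m.map Prod.fst) = ∫ z, f z.1 ∂m := fun m =>
      integral_map measurable_fst.aemeasurable f.continuous.aestronglyMeasurable
    have h2 := hconv (fun z => f z.1) (f.continuous.comp continuous_fst)
      ⟨‖f‖, fun z => (Real.norm_eq_abs (f z.1)) ▸ f.norm_coe_le_norm z.1⟩
    simp only [hmap_int] at hbcf
    rw [hmap_int πlim]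
    exact tendsto_nhds_unique h2 hbcf
  have hsnd : πlim.map Prod.snd = ν := by
    haveI : IsFiniteMeasure (πlim.map Prod.snd) := Measure.isFiniteMeasure_map _ _
    refine ext_of_forall_integral_bcf_eq _ _ (fun f => ?_)
    have hbcf := tendsto_integral_of_divergence_tendsto_zero hΨ₂ hΨ₂sc hΨ₂fin
      (fun n => (π n).map Prod.snd) hmapfin2 ν _ hcs2 hDtend f
    have hmap_int : ∀ m : Measure (EuclideanSpace ℝ (Fin d) × EuclideanSpace ℝ (Fin d)),
        ∫ x, f x ∂(m.map Prod.snd) = ∫ z, f z.2 ∂m := fun m =>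
      integral_map measurable_snd.aemeasurable f.continuous.aestronglyMeasurable
    have h2 := hconv (fun z => f z.2) (f.continuous.comp continuous_snd)
      ⟨‖f‖, fun z => (Real.norm_eq_abs (f z.2)) ▸ f.norm_coe_le_norm z.2⟩
    simp only [hmap_int] at hbcf
    rw [hmap_int πlim]
    exact tendsto_nhds_unique h2 hbcf
  have hπlims : πlim ((X ×ˢ Y)ᶜ) = 0 := hcoupling_supp πlim hfst hsnd
  -- cost bound along the sequence
  have hcost_le : ∀ n, ∫ z, ct z ∂(π n) ≤ M.toReal := by
    intro n
    haveI := hπfin n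
    have h1 : ∫⁻ z, ENNReal.ofReal (cost τ z.1 z.2) ∂(π n) ≤ M :=
      le_trans (le_trans le_self_add le_self_add) (hobj_le n)
    rw [hlint (π n) (hπfin n) (hπsupp n)] at h1
    exact (ENNReal.ofReal_le_iff_le_toReal hM_ne).mp h1
  have hct_tend := hconv ct hct_cont ⟨K0, hct_bdd⟩
  have hlim_le : ∫ z, ct z ∂πlim ≤ M.toReal :=
    le_of_tendsto hct_tend (Eventually.of_forall hcost_le)
  have hfinal : ∫⁻ z, ENNReal.ofReal (cost τ z.1 z.2) ∂πlim ≤ M := by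
    rw [hlint πlim inferInstance hπlims]
    calc ENNReal.ofReal (∫ z, ct z ∂πlim) ≤ ENNReal.ofReal M.toReal :=
          ENNReal.ofReal_le_ofReal hlim_le
      _ = M := ENNReal.ofReal_toReal hM_ne
  have hge : M ≤ ∫⁻ z, ENNReal.ofReal (cost τ z.1 z.2) ∂πlim :=
    iInf_le_of_le πlim (iInf_le_of_le ⟨hfst, hsnd⟩ le_rfl)
  exact ⟨hfst, hsnd, le_antisymm hfinal hge⟩

end
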